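/- Let n be a positive integer and let G be a simple graph that contains every tree on n vertices as a subgraph. Then the number of edges of G is at least ∑_{k=1}^{⌊n/2⌋} (⌊n/k⌋ − 1). -/

import Mathlib

open SimpleGraph Finset

/-- A simple graph `G` contains a copy of a simple graph `H` (as a subgraph) if there is an
injective map from the vertices of `H` to the vertices of `G` sending edges to edges. -/
def ContainsCopy {V W : Type*} (G : SimpleGraph V) (H : SimpleGraph W) : Prop :=
  ∃ f : W → V, Function.Injective f ∧ ∀ ⦃a b⦄, H.Adj a b → G.Adj (f a) (f b)

/-- Graph on `Fin n` given by a parent function with `p i < i` for `i > 0`. -/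
def pGraph (n : ℕ) (p : ℕ → ℕ) (hp : ∀ i, 0 < i → p i < i) : SimpleGraph (Fin n) where
  Adj a b := (0 < a.val ∧ b.val = p a.val) ∨ (0 < b.val ∧ a.val = p b.val)
  symm := by constructor; intro a b h; tauto
  loopless := by
    constructor
    intro a h
    rcases h with ⟨ha, h⟩ | ⟨ha, h⟩ <;> · have := hp _ ha; omega

lemma pGraph_reachable (n : ℕ) (hn : 0 < n) (p : ℕ → ℕ) (hp : ∀ i, 0 < i → p i < i) :
    ∀ i : ℕ, ∀ h : i < n, (pGraph n p hp).Reachable ⟨i, h⟩ ⟨0, hn⟩ := by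
  intro i
  induction i using Nat.strong_induction_on with
  | _ i ih =>
    intro h
    rcases Nat.eq_zero_or_pos i with hi | hi
    · subst hi; rfl
    · have hlt : p i < i := hp _ hi
      have hpn : p i < n := lt_trans hlt h
      have hadj : (pGraph n p hp).Adj ⟨i, h⟩ ⟨p i, hpn⟩ := Or.inl ⟨hi, rfl⟩
      exact hadj.reachable.trans (ih (p i) hlt hpn)

lemma pGraph_connected (n : ℕ) (hn : 0 < n) (p : ℕ → ℕ) (hp : ∀ i, 0 < i → p i < i) :
    (pGraph n p hp).Connected := by
  have : Nonempty (Fin n) := ⟨⟨0, hn⟩⟩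
  exact Connected.mk fun u v =>
    (pGraph_reachable n hn p hp u.val u.isLt).trans (pGraph_reachable n hn p hp v.val v.isLt).symm

lemma pGraph_acyclic (n : ℕ) (p : ℕ → ℕ) (hp : ∀ i, 0 < i → p i < i) :
    (pGraph n p hp).IsAcyclic := by
  intro v c hc
  -- choose a vertex of maximal value on the cycle
  obtain ⟨m, hm, hmax⟩ := Finset.exists_max_image c.support.toFinset (fun x => x.val)
    ⟨v, by simp [c.start_mem_support]⟩
  rw [List.mem_toFinset] at hm
  have hmax' : ∀ y ∈ c.support, y.val ≤ m.val := fun y hy => hmax y (List.mem_toFinset.2 hy)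
  have hc' := (SimpleGraph.Walk.isCycle_rotate hm).2 hc
  have hsup : ∀ y ∈ (c.rotate m hm).support, y.val ≤ m.val := by
    intro y hy
    rw [SimpleGraph.Walk.support_eq_cons] at hy
    rcases List.mem_cons.1 hy with rfl | hy
    · exact le_rfl
    · exact hmax' y (List.mem_of_mem_tail ((SimpleGraph.Walk.support_rotate c m hm).mem_iff.1 hy))
  set c' := c.rotate m hm with hc'def
  clear_value c'
  cases c' with
  | nil => exact hc'.ne_nil rfl
  | @cons _ w _ h q =>
    rw [SimpleGraph.Walk.cons_isCycle_iff] at hc'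
    -- w is on the support
    have hwsup : w ∈ (SimpleGraph.Walk.cons h q).support := by
      simp [SimpleGraph.Walk.support_cons, q.start_mem_support]
    -- identify w as the parent of m
    have hw : w.val = p m.val := by
      rcases h with ⟨_, h1⟩ | ⟨_, h1⟩
      · exact h1
      · have := hp w.val ‹0 < w.val›
        have := hsup w hwsup
        omega
    -- look at the last edge of q via its reverse
    have hq := q.reverse
    rcases hq' : q.reverse with _ | @⟨_, x, _, h', q''⟩
    · exact h.ne (by simpa using congrArg SimpleGraph.Walk.endpoint hq')
    · -- x is on the support of the cycle
      have hxsup : x ∈ (SimpleGraph.Walk.cons h q).support := by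
        have : x ∈ q.reverse.support := by
          rw [hq', SimpleGraph.Walk.support_cons]
          exact List.mem_cons.2 (Or.inr q''.start_mem_support)
        rw [SimpleGraph.Walk.support_reverse, List.mem_reverse] at this
        rw [SimpleGraph.Walk.support_cons]
        exact List.mem_cons.2 (Or.inr this)
      have hx : x.val = p m.val := by
        rcases h' with ⟨_, h1⟩ | ⟨_, h1⟩
        · exact h1
        · have := hp x.val ‹0 < x.val›
          have := hsup x hxsup
          omega
      have hxw : x = w := Fin.ext (hx.trans hw.symm)
      apply hc'.2
      have : s(m, x) ∈ q.reverse.edges := by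
        rw [hq', SimpleGraph.Walk.edges_cons]
        exact List.mem_cons.2 (Or.inl rfl)
      rw [SimpleGraph.Walk.edges_reverse, List.mem_reverse] at this
      rwa [hxw] at this

lemma pGraph_isTree (n : ℕ) (hn : 0 < n) (p : ℕ → ℕ) (hp : ∀ i, 0 < i → p i < i) :
    (pGraph n p hp).IsTree :=
  ⟨pGraph_connected n hn p hp, pGraph_acyclic n p hp⟩

/-- Key step: find a star of size `n/k` centered outside `S` with all leaves outside `S`. -/
lemma exists_star {V : Type*} [Fintype V] [DecidableEq V] (n : ℕ) (hn : 0 < n)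
    (G : SimpleGraph V)
    (hG : ∀ T : SimpleGraph (Fin n), T.IsTree → ContainsCopy G T)
    (k : ℕ) (hk : 0 < k) (hk2 : k ≤ n / 2) (S : Finset V) (hS : S.card < k) :
    ∃ (v : V) (L : Finset V), v ∉ S ∧ v ∉ L ∧ (∀ x ∈ L, x ∉ S) ∧ L.card = n / k - 1 ∧
      ∀ x ∈ L, G.Adj v x := by
  set m := n / k with hm
  have hm2 : 2 ≤ m := (Nat.le_div_iff_mul_le hk).2 (by omega)
  have hkm : k * m ≤ m * k := le_of_eq (Nat.mul_comm k m)
  have hkmn : k * m ≤ n := by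
    rw [Nat.mul_comm]; exact Nat.div_mul_le_self n k
  have hm0 : 0 < m := by omega
  -- the parent function of the caterpillar of k stars of size m
  set p : ℕ → ℕ := fun i => if i < k * m then (if i % m = 0 then i - m else (i / m) * m) else 0
    with hpdef
  have hp : ∀ i, 0 < i → p i < i := by
    intro i hi
    simp only [hpdef]
    split
    · split
      · exact Nat.sub_lt hi hm0
      · have h1 := Nat.div_add_mod i m
        have h2 : i % m ≠ 0 := by assumption
        have h3 : i / m * m = m * (i / m) := Nat.mul_comm _ _
        omega
    · exact hi
  obtain ⟨f, hfinj, hfadj⟩ := hG (pGraph n p hp) (pGraph_isTree n hn p hp)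
  -- index bound for star vertices
  have hidx : ∀ j t : ℕ, j < k → t < m → j * m + t < n := by
    intro j t hj ht
    have h1 : j * m + t < (j + 1) * m := by rw [Nat.succ_mul]; omega
    have h2 : (j + 1) * m ≤ k * m := Nat.mul_le_mul_right m hj
    omega
  have hdiv : ∀ j t : ℕ, t < m → (j * m + t) / m = j := by
    intro j t ht
    rw [Nat.add_comm, Nat.add_mul_div_right _ _ hm0, Nat.div_eq_of_lt ht, Nat.zero_add]
  have hmod : ∀ j t : ℕ, t < m → (j * m + t) % m = t := by
    intro j t ht
    rw [Nat.add_comm, Nat.add_mul_mod_self_right, Nat.mod_eq_of_lt ht]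
  -- adjacency within star j
  have hadj : ∀ j t : ℕ, ∀ (hj : j < k) (ht1 : 1 ≤ t) (ht : t < m),
      (pGraph n p hp).Adj ⟨j * m + t, hidx j t hj ht⟩ ⟨j * m, hidx j 0 hj hm0⟩ := by
    intro j t hj ht1 ht
    refine Or.inl ⟨show (0:ℕ) < j * m + t by omega, ?_⟩
    show (j * m : ℕ) = p (j * m + t)
    have h1 : j * m + t < k * m := by
      have h1a : j * m + t < (j + 1) * m := by rw [Nat.succ_mul]; omega
      have h1b : (j + 1) * m ≤ k * m := Nat.mul_le_mul_right m hj
      omega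
    have h2 : (j * m + t) % m = t := hmod j t ht
    have h3 : (j * m + t) / m = j := hdiv j t ht
    simp only [hpdef]
    rw [if_pos h1, if_neg (by omega), h3]
  -- pigeonhole: some star misses S entirely
  have hpig : ∃ j, ∃ hj : j < k, ∀ t, ∀ ht : t < m, f ⟨j * m + t, hidx j t hj ht⟩ ∉ S := by
    by_contra hcon
    push_neg at hcon
    -- choose for each j < k an element of S in star j
    have hch : ∀ j : Fin k, ∃ t : ℕ, ∃ ht : t < m, f ⟨j.val * m + t, hidx _ t j.isLt ht⟩ ∈ S := by
      intro j
      obtain ⟨t, ht, hmem⟩ := hcon j.val j.isLt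
      exact ⟨t, ht, by simpa using hmem⟩
    choose t ht hmem using hch
    have hginj : Function.Injective fun j : Fin k => f ⟨j.val * m + t j, hidx _ _ j.isLt (ht j)⟩ := by
      intro a b hab
      have h2 := congrArg Fin.val (hfinj hab)
      simp only [Fin.val_mk] at h2
      have : a.val = b.val := by
        rw [← hdiv a.val (t a) (ht a), ← hdiv b.val (t b) (ht b), h2]
      exact Fin.ext this
    have := Finset.card_le_card_of_injOn
      (s := (Finset.univ : Finset (Fin k))) (t := S)
      (fun j : Fin k => f ⟨j.val * m + t j, hidx _ _ j.isLt (ht j)⟩)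
      (fun j _ => hmem j) hginj.injOn
    simp at this
    omega
  obtain ⟨j, hj, hmiss⟩ := hpig
  refine ⟨f ⟨j * m, hidx j 0 hj hm0⟩, (Finset.Ico 1 m).attach.image
    (fun t => f ⟨j * m + t.val, hidx j t.val hj (Finset.mem_Ico.1 t.2).2⟩), ?_, ?_, ?_, ?_, ?_⟩
  · simpa using hmiss 0 hm0
  · simp only [Finset.mem_image, Finset.mem_attach, true_and]
    rintro ⟨u, hu⟩
    have h2 : (j * m + (u : ℕ) : ℕ) = j * m := congrArg Fin.val (hfinj hu)
    have := (Finset.mem_Ico.1 u.2).1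
    omega
  · simp only [Finset.mem_image, Finset.mem_attach, true_and]
    rintro x ⟨u, rfl⟩
    exact hmiss u.val (Finset.mem_Ico.1 u.2).2
  · rw [Finset.card_image_of_injective _ ?_, Finset.card_attach, Nat.card_Ico]
    intro a b hab
    have h2 : j * m + (a : ℕ) = j * m + (b : ℕ) := congrArg Fin.val (hfinj hab)
    exact Subtype.ext (by omega)
  · simp only [Finset.mem_image, Finset.mem_attach, true_and]
    rintro x ⟨u, rfl⟩
    exact (hfadj (hadj j u.val hj (Finset.mem_Ico.1 u.2).1 (Finset.mem_Ico.1 u.2).2)).symm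

/-- If a finite simple graph `G` contains every tree on `n` vertices as a subgraph, then
`G` has at least `∑_{k=1}^{⌊n/2⌋} (⌊n/k⌋ − 1)` edges. -/
theorem sum_le_edges_of_contains_all_trees {V : Type*} [Fintype V]
    (n : ℕ) (hn : 0 < n) (G : SimpleGraph V) [DecidableRel G.Adj]
    (hG : ∀ T : SimpleGraph (Fin n), T.IsTree → ContainsCopy G T) :
    ∑ k ∈ Finset.Icc 1 (n / 2), (n / k - 1) ≤ G.edgeFinset.card := by
  classical
  have key : ∀ j, j ≤ n / 2 → ∃ S : Finset V, S.card = j ∧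
      ∑ k ∈ Finset.Icc 1 j, (n / k - 1) ≤
        (G.edgeFinset.filter (fun e => ∃ s ∈ S, s ∈ e)).card := by
    intro j
    induction j with
    | zero => exact fun _ => ⟨∅, rfl, by simp⟩
    | succ j ihj =>
      intro hj
      obtain ⟨S, hcard, hsum⟩ := ihj (by omega)
      obtain ⟨v, L, hvS, hvL, hLS, hLcard, hadj⟩ :=
        exists_star n hn G hG (j + 1) (Nat.succ_pos j) hj S (by omega)
      refine ⟨insert v S, by rw [Finset.card_insert_of_notMem hvS, hcard], ?_⟩
      rw [Finset.sum_Icc_succ_top (by omega)]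
      set Old := G.edgeFinset.filter (fun e => ∃ s ∈ S, s ∈ e) with hOld
      set Enew := L.image (fun x => s(v, x)) with hEnew
      have hEsub : Enew ⊆ G.edgeFinset.filter (fun e => ∃ s ∈ insert v S, s ∈ e) := by
        intro e he
        simp only [hEnew, Finset.mem_image] at he
        obtain ⟨x, hx, rfl⟩ := he
        simp only [Finset.mem_filter, SimpleGraph.mem_edgeFinset, SimpleGraph.mem_edgeSet]
        exact ⟨hadj x hx, v, Finset.mem_insert_self v S, Sym2.mem_mk_left v x⟩
      have hOsub : Old ⊆ G.edgeFinset.filter (fun e => ∃ s ∈ insert v S, s ∈ e) := by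
        intro e he
        simp only [hOld, Finset.mem_filter] at he ⊢
        obtain ⟨h1, s, hs1, hs2⟩ := he
        exact ⟨h1, s, Finset.mem_insert_of_mem hs1, hs2⟩
      have hdisj : Disjoint Old Enew := by
        rw [Finset.disjoint_right]
        intro e heE heO
        simp only [hEnew, Finset.mem_image] at heE
        obtain ⟨x, hx, rfl⟩ := heE
        simp only [hOld, Finset.mem_filter] at heO
        obtain ⟨-, s, hsS, hse⟩ := heO
        rcases Sym2.mem_iff.1 hse with rfl | rfl
        · exact hvS hsS
        · exact hLS _ hx hsS
      have hEcard : Enew.card = n / (j + 1) - 1 := by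
        rw [hEnew, Finset.card_image_of_injOn fun a _ b _ hab => Sym2.congr_right.1 hab, hLcard]
      calc (∑ k ∈ Finset.Icc 1 j, (n / k - 1)) + (n / (j + 1) - 1)
          ≤ Old.card + Enew.card := Nat.add_le_add hsum (le_of_eq hEcard.symm)
        _ = (Old ∪ Enew).card := (Finset.card_union_of_disjoint hdisj).symm
        _ ≤ (G.edgeFinset.filter (fun e => ∃ s ∈ insert v S, s ∈ e)).card :=
            Finset.card_le_card (Finset.union_subset hOsub hEsub)
  obtain ⟨S, -, hsum⟩ := key (n / 2) le_rfl
  exact hsum.trans (Finset.card_le_card (Finset.filter_subset _ _))
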